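/- Let k ≥ 3 and n be integers with n ≥ 12 and n ≥ 2k+1. Let F be a simple graph on n vertices, and suppose S ⊆ V(F) with 1 ≤ |S| ≤ k−2 is such that every connected component of F − S is factor-critical and |S| + Σ_{i=1}^{q} (d_i − 1)/2 = k − 1, where d_1 ≥ d_2 ≥ … ≥ d_q are the orders of the connected components of F − S. If e(F) ≥ 2 + max{ C(2k−3,2), C(k−2,2) + (n−k+2)(k−2) }, then at most one connected component of F − S has more than one vertex (i.e., d_2 = 1). -/
import Mathlib

set_option maxHeartbeats 1000000


/-- A graph `D` is factor-critical if for every vertex `v`, the graph `D - v` has a perfect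
matching, i.e. `D` has a matching covering exactly the complement of `{v}`. -/
def FactorCritical {W : Type*} (D : SimpleGraph W) : Prop :=
  ∀ v : W, ∃ M : D.Subgraph, M.IsMatching ∧ M.verts = {v}ᶜ

/-- Sum of squares is at most square of sum over any finset of naturals. -/
lemma aux_sum_sq_le {ι : Type*} (s : Finset ι) (f : ι → ℕ) :
    ∑ i ∈ s, f i ^ 2 ≤ (∑ i ∈ s, f i) ^ 2 := by
  calc ∑ i ∈ s, f i ^ 2 ≤ ∑ i ∈ s, f i * (∑ j ∈ s, f j) := by
        refine Finset.sum_le_sum fun i hi => ?_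
        rw [pow_two]
        exact Nat.mul_le_mul_left _ (Finset.single_le_sum (fun j _ => Nat.zero_le _) hi)
    _ = (∑ i ∈ s, f i) ^ 2 := by rw [← Finset.sum_mul, pow_two]

lemma aux_two_mul_choose_two (m : ℕ) : 2 * ((m + 1).choose 2) = (m + 1) * m := by
  rw [Nat.choose_two_right]
  have h : 2 ∣ (m + 1) * ((m + 1) - 1) := by
    rcases Nat.even_mul_succ_self m with ⟨r, hr⟩
    exact ⟨r, by simp only [Nat.add_sub_cancel]; rw [mul_comm, hr]; omega⟩
  simpa using Nat.mul_div_cancel' h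

/-- A nonempty finite factor-critical graph has odd order. -/
lemma aux_factorCritical_card_odd {W : Type*} [Fintype W] [Nonempty W]
    (D : SimpleGraph W) (h : FactorCritical D) : ∃ m, Fintype.card W = 2 * m + 1 := by
  classical
  obtain ⟨v⟩ := ‹Nonempty W›
  obtain ⟨M, hM, hMv⟩ := h v
  haveI : Fintype ↥M.verts := Fintype.ofFinite _
  have heven : Even M.verts.toFinset.card := hM.even_card
  rw [← Set.ncard_eq_toFinset_card'] at heven
  rw [hMv] at heven
  have h2 := Set.ncard_add_ncard_compl ({v} : Set W)
  rw [Set.ncard_singleton, Nat.card_eq_fintype_card] at h2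
  rcases heven with ⟨r, hr⟩
  exact ⟨r, by omega⟩

/-- The numeric core of the argument. -/
lemma aux_core (a b c e Q x y : ℕ) (hMB : x + y = b)
    (hQ : Q ≤ (x + 1) ^ 2 + (y + 1) ^ 2)
    (H1 : 4 + (2 * a + 2 * b + 5) * (2 * a + 2 * b + 4) ≤ 2 * e)
    (H2 : 4 + (a + b + 2) * (a + b + 1) + 2 * ((a + b + 7 + c) * (a + b + 2)) ≤ 2 * e)
    (HL : 2 * e ≤ (a + 1) * (2 * a + 2 * b + 8 + c) + (a + 1) * (a + 2 * b + 8 + c)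
      + 4 * Q + 2 * (b + 2)) : False := by
  have hq2 : Q ≤ b ^ 2 + 2 * b + 2 := by nlinarith [Nat.zero_le (x * y)]
  nlinarith [Nat.zero_le (a * b), Nat.zero_le (a * c), Nat.zero_le (b * c),
    Nat.zero_le (a * a), Nat.zero_le (b * b), Nat.zero_le (c * c),
    Nat.zero_le ((a + b) * (a + b))]

/-- Claim 3.9: let `k ≥ 3`, `n ≥ 12`, `n ≥ 2k+1`, and let `F` be a graph on `n` vertices.
Suppose `S` is a set of vertices with `1 ≤ |S| ≤ k-2` such that every connected component of
`F - S` is factor-critical and `|S| + Σᵢ (dᵢ - 1)/2 = k - 1`, where the `dᵢ` are the orders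
of the components of `F - S`. If `e(F) ≥ 2 + max{C(2k-3,2), C(k-2,2) + (n-k+2)(k-2)}`, then
at most one component of `F - S` has more than one vertex (i.e. `d₂ = 1`). -/
theorem claim_d2_eq_one_middle_case
    {V : Type*} [Fintype V] (k n : ℕ) (hk : 3 ≤ k) (hn12 : 12 ≤ n) (hn : 2 * k + 1 ≤ n)
    (hV : Fintype.card V = n)
    (F : SimpleGraph V) (S : Set V) (hS1 : 1 ≤ S.ncard) (hS2 : S.ncard ≤ k - 2)
    (hfc : ∀ K : (F.induce Sᶜ).ConnectedComponent,
      FactorCritical ((F.induce Sᶜ).induce K.supp))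
    (hsum : S.ncard +
      ∑ᶠ K : (F.induce Sᶜ).ConnectedComponent, (K.supp.ncard - 1) / 2 = k - 1)
    (he : 2 + max ((2 * k - 3).choose 2) ((k - 2).choose 2 + (n - k + 2) * (k - 2))
      ≤ F.edgeSet.ncard) :
    {K : (F.induce Sᶜ).ConnectedComponent | 1 < K.supp.ncard}.Subsingleton := by
  classical
  set G := F.induce Sᶜ with hGdef
  intro K1 hK1 K2 hK2
  by_contra hne12
  haveI : Fintype ↥Sᶜ := Fintype.ofFinite _
  haveI : Fintype G.ConnectedComponent := Fintype.ofFinite _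
  -- every component has odd order
  have hodd : ∀ K : G.ConnectedComponent, ∃ m, K.supp.ncard = 2 * m + 1 := by
    intro K
    obtain ⟨v, hv⟩ := K.exists_rep
    have hvm : v ∈ K.supp := by
      rw [SimpleGraph.ConnectedComponent.mem_supp_iff]; exact hv
    haveI : Fintype ↥K.supp := Fintype.ofFinite _
    haveI : Nonempty ↥K.supp := ⟨⟨v, hvm⟩⟩
    obtain ⟨m, hm⟩ := aux_factorCritical_card_odd _ (hfc K)
    exact ⟨m, by rw [Set.ncard_eq_toFinset_card', Set.toFinset_card, hm]⟩
  choose m hm using hodd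
  -- the sum hypothesis in terms of m
  have hsum' : S.ncard + ∑ K : G.ConnectedComponent, m K = k - 1 := by
    rw [finsum_eq_sum_of_fintype] at hsum
    rw [← hsum]
    congr 1
    refine Finset.sum_congr rfl fun K _ => ?_
    rw [hm K]
    omega
  -- fiber cardinalities
  have hcardfib : ∀ K : G.ConnectedComponent,
      Fintype.card {x : ↥Sᶜ // G.connectedComponentMk x = K} = 2 * m K + 1 := by
    intro K
    rw [← hm K, Set.ncard_eq_toFinset_card', Set.toFinset_card]
    exact Fintype.card_congr (Equiv.subtypeEquivRight
      (fun x => (SimpleGraph.ConnectedComponent.mem_supp_iff K x).symm))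
  -- total size of the complement
  have hns : ∑ K : G.ConnectedComponent, (2 * m K + 1) = n - S.ncard := by
    have h1 : ∑ K : G.ConnectedComponent,
        (∑ _x : {x : ↥Sᶜ // G.connectedComponentMk x = K}, 1) = ∑ _x : ↥Sᶜ, 1 :=
      Fintype.sum_fiberwise G.connectedComponentMk (fun _ : ↥Sᶜ => (1 : ℕ))
    have h2 : (Sᶜ : Set V).ncard = n - S.ncard := by
      have := Set.ncard_add_ncard_compl S
      rw [Nat.card_eq_fintype_card, hV] at this
      omega
    calc ∑ K : G.ConnectedComponent, (2 * m K + 1)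
        = ∑ K : G.ConnectedComponent,
            (∑ _x : {x : ↥Sᶜ // G.connectedComponentMk x = K}, 1) := by
          refine Finset.sum_congr rfl fun K _ => ?_
          rw [Finset.sum_const, Finset.card_univ, hcardfib K, smul_eq_mul, mul_one]
      _ = ∑ _x : ↥Sᶜ, 1 := h1
      _ = (Sᶜ : Set V).ncard := by
          rw [Finset.sum_const, Finset.card_univ, smul_eq_mul, mul_one,
            Set.ncard_eq_toFinset_card', Set.toFinset_card]
      _ = n - S.ncard := h2
  -- degree bound for vertices outside S
  have hdeg : ∀ x : ↥Sᶜ, F.degree (x : V) + 1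
      ≤ S.ncard + (G.connectedComponentMk x).supp.ncard := by
    intro x
    set K := G.connectedComponentMk x with hK
    have hxK : x ∈ K.supp := by rw [SimpleGraph.ConnectedComponent.mem_supp_iff]
    have hsub : F.neighborSet (x : V) ∪ {(x : V)} ⊆ S ∪ (Subtype.val '' K.supp) := by
      rintro u (hu | hu)
      · by_cases hus : u ∈ S
        · exact Or.inl hus
        · refine Or.inr ⟨⟨u, hus⟩, ?_, rfl⟩
          rw [SimpleGraph.ConnectedComponent.mem_supp_iff, hK]
          apply SimpleGraph.ConnectedComponent.sound
          have hadj : G.Adj ⟨u, hus⟩ x := by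
            simp only [hGdef, SimpleGraph.comap_adj, Function.Embedding.coe_subtype]
            exact ((F.adj_symm hu))
          exact hadj.reachable
      · exact Or.inr ⟨x, hxK, by simp at hu; simp [hu]⟩
    have h1 : (F.neighborSet (x : V) ∪ {(x : V)}).ncard = F.degree (x : V) + 1 := by
      rw [Set.ncard_union_eq (by simp) (Set.toFinite _) (Set.toFinite _),
        Set.ncard_singleton]
      congr 1
      rw [Set.ncard_eq_toFinset_card', Set.toFinset_card]
      exact F.card_neighborSet_eq_degree _
    calc F.degree (x : V) + 1 = (F.neighborSet (x : V) ∪ {(x : V)}).ncard := h1.symm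
      _ ≤ (S ∪ (Subtype.val '' K.supp)).ncard :=
          Set.ncard_le_ncard hsub (Set.toFinite _)
      _ ≤ S.ncard + (Subtype.val '' K.supp).ncard := Set.ncard_union_le _ _
      _ = S.ncard + K.supp.ncard := by
          rw [Set.ncard_image_of_injective _ Subtype.val_injective]
  -- degree sum formula
  have he2 : ∑ v : V, F.degree v = 2 * F.edgeSet.ncard := by
    rw [F.sum_degrees_eq_twice_card_edges]
    congr 1
    rw [SimpleGraph.edgeFinset, Set.toFinset_card, Set.ncard_eq_toFinset_card',
      Set.toFinset_card]
  -- split the degree sum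
  have hsplit : ∑ v : V, F.degree v
      ≤ S.ncard * (n - 1) + ∑ K : G.ConnectedComponent, (2 * m K + 1) * (S.ncard + 2 * m K) := by
    rw [← Finset.sum_add_sum_compl S.toFinset (fun v => F.degree v)]
    gcongr
    · -- sum over S
      have := Finset.sum_le_card_nsmul S.toFinset (fun v => F.degree v) (n - 1)
        (fun v _ => by
          show F.degree v ≤ n - 1
          have h := F.degree_lt_card_verts v
          rw [hV] at h
          omega)
      rwa [smul_eq_mul, ← Set.ncard_eq_toFinset_card'] at this
    · -- sum over the complement
      have hst : ∀ v : V, v ∈ S.toFinsetᶜ ↔ v ∈ Sᶜ := by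
        intro v; simp
      rw [Finset.sum_subtype _ hst (fun v => F.degree v)]
      rw [← Fintype.sum_fiberwise (G.connectedComponentMk) (fun x : ↥Sᶜ => F.degree (x : V))]
      refine Finset.sum_le_sum fun K _ => ?_
      have hb : ∀ x : {x : ↥Sᶜ // G.connectedComponentMk x = K},
          F.degree ((x : ↥Sᶜ) : V) + 1 ≤ S.ncard + (2 * m K + 1) := by
        rintro ⟨x, hx⟩
        have := hdeg x
        rw [hx, hm K] at this
        exact this
      have hsum2 : ∑ x : {x : ↥Sᶜ // G.connectedComponentMk x = K},
          (F.degree ((x : ↥Sᶜ) : V) + 1) ≤ (2 * m K + 1) * (S.ncard + (2 * m K + 1)) := by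
        have := Finset.sum_le_card_nsmul Finset.univ
          (fun x : {x : ↥Sᶜ // G.connectedComponentMk x = K} =>
            F.degree ((x : ↥Sᶜ) : V) + 1) (S.ncard + (2 * m K + 1)) (fun x _ => hb x)
        rwa [smul_eq_mul, Finset.card_univ, hcardfib K] at this
      rw [Finset.sum_add_distrib, Finset.sum_const, Finset.card_univ, hcardfib K,
        smul_eq_mul, mul_one] at hsum2
      have hexp : (2 * m K + 1) * (S.ncard + (2 * m K + 1))
          = (2 * m K + 1) * (S.ncard + 2 * m K) + (2 * m K + 1) := by ring
      omega
  -- expand the per-component sum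
  have hexpand : ∑ K : G.ConnectedComponent, (2 * m K + 1) * (S.ncard + 2 * m K)
      = S.ncard * (n - S.ncard) + 4 * (∑ K : G.ConnectedComponent, (m K) ^ 2)
        + 2 * (∑ K : G.ConnectedComponent, m K) := by
    have h1 : ∀ K : G.ConnectedComponent, (2 * m K + 1) * (S.ncard + 2 * m K)
        = S.ncard * (2 * m K + 1) + (4 * (m K) ^ 2 + 2 * m K) := fun K => by ring
    rw [Finset.sum_congr rfl fun K _ => h1 K, Finset.sum_add_distrib,
      ← Finset.mul_sum, hns, Finset.sum_add_distrib, ← Finset.mul_sum, ← Finset.mul_sum]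
    ring
  -- m K1, m K2 ≥ 1
  have hm1 : 1 ≤ m K1 := by have := hm K1; simp only [Set.mem_setOf_eq] at hK1; omega
  have hm2 : 1 ≤ m K2 := by have := hm K2; simp only [Set.mem_setOf_eq] at hK2; omega
  -- bound the sum of squares
  set B := ∑ K ∈ Finset.univ.erase K1, m K with hB
  have hQle : ∑ K : G.ConnectedComponent, (m K) ^ 2 ≤ (m K1) ^ 2 + B ^ 2 := by
    rw [← Finset.add_sum_erase Finset.univ (fun K => (m K) ^ 2) (Finset.mem_univ K1)]
    exact Nat.add_le_add_left (aux_sum_sq_le _ _) _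
  have hBsum : m K1 + B = ∑ K : G.ConnectedComponent, m K := by
    rw [hB, Finset.add_sum_erase Finset.univ m (Finset.mem_univ K1)]
  have hB1 : 1 ≤ B := by
    have hmem : K2 ∈ Finset.univ.erase K1 :=
      Finset.mem_erase.2 ⟨fun h => hne12 h.symm, Finset.mem_univ _⟩
    exact le_trans hm2 (Finset.single_le_sum (fun i _ => Nat.zero_le _) hmem)
  -- assemble numbers
  set s := S.ncard with hs
  set T := ∑ K : G.ConnectedComponent, m K with hT
  set Q := ∑ K : G.ConnectedComponent, (m K) ^ 2 with hQ
  set e := F.edgeSet.ncard with heSet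
  have hup : 2 * e ≤ s * (n - 1) + (s * (n - s) + 4 * Q + 2 * T) := by
    rw [← he2, ← hexpand]
    exact hsplit
  have hkeq : s + T = k - 1 := hsum'
  -- introduce slack variables
  obtain ⟨a, ha⟩ : ∃ a, s = a + 1 := ⟨s - 1, by omega⟩
  obtain ⟨x, hx⟩ : ∃ x, m K1 = x + 1 := ⟨m K1 - 1, by omega⟩
  obtain ⟨y, hy⟩ : ∃ y, B = y + 1 := ⟨B - 1, by omega⟩
  have hTxy : T = x + y + 2 := by omega
  set b := x + y with hb
  have hk2 : k = a + b + 4 := by omega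
  obtain ⟨c, hc⟩ : ∃ c, n = 2 * k + 1 + c := ⟨n - (2 * k + 1), by omega⟩
  -- the two edge lower bounds
  have hmax1 : 2 + (2 * k - 3).choose 2 ≤ e := le_trans (by gcongr; exact le_max_left _ _) he
  have hmax2 : 2 + ((k - 2).choose 2 + (n - k + 2) * (k - 2)) ≤ e :=
    le_trans (by gcongr; exact le_max_right _ _) he
  have hch1 : (2 * k - 3) = 2 * a + 2 * b + 5 := by omega
  have hch2 : (k - 2) = a + b + 2 := by omega
  have hch3 : (n - k + 2) = a + b + 7 + c := by omega
  have H1 : 4 + (2 * a + 2 * b + 5) * (2 * a + 2 * b + 4) ≤ 2 * e := by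
    have h2 : 2 * ((2 * a + 2 * b + 5).choose 2) = (2 * a + 2 * b + 5) * (2 * a + 2 * b + 4) := by
      have := aux_two_mul_choose_two (2 * a + 2 * b + 4)
      convert this using 3 <;> ring
    rw [hch1] at hmax1
    omega
  have H2 : 4 + (a + b + 2) * (a + b + 1) + 2 * ((a + b + 7 + c) * (a + b + 2)) ≤ 2 * e := by
    have h2 : 2 * ((a + b + 2).choose 2) = (a + b + 2) * (a + b + 1) := by
      have := aux_two_mul_choose_two (a + b + 1)
      convert this using 3 <;> ring
    rw [hch2, hch3] at hmax2
    omega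
  have HL : 2 * e ≤ (a + 1) * (2 * a + 2 * b + 8 + c) + (a + 1) * (a + 2 * b + 8 + c)
      + 4 * Q + 2 * (b + 2) := by
    have hn1 : n - 1 = 2 * a + 2 * b + 8 + c := by omega
    have hn2 : n - s = a + 2 * b + 8 + c := by omega
    rw [hn1, hn2, ha, hTxy] at hup
    omega
  have hQ2 : Q ≤ (x + 1) ^ 2 + (y + 1) ^ 2 := by rw [← hx, ← hy]; exact hQle
  exact aux_core a b c e Q x y rfl hQ2 H1 H2 HL
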